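/- Let n ≥ 1 and let W, X₁, …, X_n, Y₁, …, Y_n be random variables on a probability space taking values in finite sets. Suppose that for each i ∈ {1, …, n}: (a) X_i = e_i(W, Y₁, …, Y_{i−1}) almost surely for a deterministic function e_i (causal encoding with feedback), and (b) Y_i is conditionally independent of W given (X_i, Y₁, …, Y_{i−1}). Then I(W ; Y₁, …, Y_n) = Σ_{i=1}^n I(X_i ; Y_i | Y₁, …, Y_{i−1}); that is, the mutual information between the message and the outputs equals the directed mutual information from X^n to Y^n. -/

import Mathlib

open MeasureTheory

/-- The probability of a set, as a real number. -/
noncomputable def prob {Ω : Type*} [MeasurableSpace Ω] (μ : Measure Ω) (s : Set Ω) : ℝ :=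
  (μ s).toReal

/-- Shannon entropy (base 2) of a finite-valued random variable. -/
noncomputable def entropy {Ω A : Type*} [MeasurableSpace Ω] [Fintype A]
    (μ : Measure Ω) (U : Ω → A) : ℝ :=
  ∑ u : A, -(prob μ (U ⁻¹' {u})) * Real.logb 2 (prob μ (U ⁻¹' {u}))

/-- Conditional Shannon entropy (base 2) `H(U | V)`. -/
noncomputable def condEntropy {Ω A B : Type*} [MeasurableSpace Ω] [Fintype A] [Fintype B]
    (μ : Measure Ω) (U : Ω → A) (V : Ω → B) : ℝ :=
  ∑ v : B, ∑ u : A,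
    -(prob μ (U ⁻¹' {u} ∩ V ⁻¹' {v})) *
      Real.logb 2 (prob μ (U ⁻¹' {u} ∩ V ⁻¹' {v}) / prob μ (V ⁻¹' {v}))

/-- Mutual information `I(U ; V) = H(U) + H(V) - H(U, V)`. -/
noncomputable def mutInfo {Ω A B : Type*} [MeasurableSpace Ω] [Fintype A] [Fintype B]
    (μ : Measure Ω) (U : Ω → A) (V : Ω → B) : ℝ :=
  entropy μ U + entropy μ V - entropy μ (fun ω => (U ω, V ω))

/-- Conditional mutual information `I(X ; Y | Z) = H(X|Z) + H(Y|Z) - H(X,Y|Z)`. -/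
noncomputable def condMutInfo {Ω A B C : Type*} [MeasurableSpace Ω]
    [Fintype A] [Fintype B] [Fintype C]
    (μ : Measure Ω) (X : Ω → A) (Y : Ω → B) (Z : Ω → C) : ℝ :=
  condEntropy μ X Z + condEntropy μ Y Z - condEntropy μ (fun ω => (X ω, Y ω)) Z

/-- The vector of past outputs `Y^{i-1} = (Y_0, …, Y_{i-1})` before time `i`. -/
def past {Ω 𝒴 : Type*} {n : ℕ} (Y : Fin n → Ω → 𝒴) (i : Fin n) (ω : Ω) : Fin i → 𝒴 :=
  fun j => Y (j.castLT (j.isLt.trans i.isLt)) ω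

section Helpers
set_option linter.unusedSectionVars false

lemma pair_preimage {Ω A B : Type*} (U : Ω → A) (V : Ω → B) (u : A) (v : B) :
    (fun ω => (U ω, V ω)) ⁻¹' {(u, v)} = U ⁻¹' {u} ∩ V ⁻¹' {v} := by
  ext ω; simp [Prod.ext_iff]

variable {Ω : Type*} [MeasurableSpace Ω] {μ : Measure Ω} [IsProbabilityMeasure μ]

lemma prob_nonneg (s : Set Ω) : 0 ≤ prob μ s := ENNReal.toReal_nonneg

lemma prob_mono {s t : Set Ω} (h : s ⊆ t) : prob μ s ≤ prob μ t :=
  ENNReal.toReal_mono (measure_ne_top μ t) (measure_mono h)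

lemma sum_prob_inter {A : Type*} [Fintype A] [MeasurableSpace A] [MeasurableSingletonClass A]
    {U : Ω → A} (hU : Measurable U) {s : Set Ω} (hs : MeasurableSet s) :
    ∑ u : A, prob μ (U ⁻¹' {u} ∩ s) = prob μ s := by
  have h1 : (⋃ u : A, U ⁻¹' {u} ∩ s) = s := by ext ω; simp
  have hd : Pairwise (Function.onFun Disjoint fun u : A => U ⁻¹' {u} ∩ s) := by
    intro u v huv
    simp only [Function.onFun, Set.disjoint_left]
    rintro ω ⟨h1, -⟩ ⟨h2, -⟩
    exact huv (h1.symm.trans h2)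
  have h2 : μ s = ∑ u : A, μ (U ⁻¹' {u} ∩ s) := by
    conv_lhs => rw [← h1]
    rw [measure_iUnion hd fun u => (hU (measurableSet_singleton u)).inter hs, tsum_fintype]
  rw [prob, h2, ENNReal.toReal_sum]
  · rfl
  · intro u _; exact measure_ne_top μ _

lemma entropy_comp {A B : Type*} [Fintype A] [Fintype B] [DecidableEq B]
    {f : A → B} (hf : Function.Injective f) (T : Ω → A) :
    entropy μ (fun ω => f (T ω)) = entropy μ T := by
  unfold entropy
  have h0 : ∀ b ∈ Finset.univ, b ∉ Finset.univ.image f →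
      -(prob μ ((fun ω => f (T ω)) ⁻¹' {b})) *
        Real.logb 2 (prob μ ((fun ω => f (T ω)) ⁻¹' {b})) = 0 := by
    intro b _ hb
    have : (fun ω => f (T ω)) ⁻¹' {b} = ∅ := by
      ext ω; simp only [Set.mem_preimage, Set.mem_singleton_iff, Set.mem_empty_iff_false,
        iff_false]
      intro h; exact hb (Finset.mem_image.2 ⟨T ω, Finset.mem_univ _, h⟩)
    simp [this, prob]
  rw [← Finset.sum_subset (Finset.subset_univ (Finset.univ.image f)) h0,
    Finset.sum_image (fun a _ b _ h => hf h)]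
  refine Finset.sum_congr rfl fun a _ => ?_
  have : (fun ω => f (T ω)) ⁻¹' {f a} = T ⁻¹' {a} := by
    ext ω; simp [hf.eq_iff]
  rw [this]

lemma entropy_congr_ae {A : Type*} [Fintype A] {T T' : Ω → A} (h : T =ᵐ[μ] T') :
    entropy μ T = entropy μ T' := by
  unfold entropy
  refine Finset.sum_congr rfl fun a _ => ?_
  have : μ (T ⁻¹' {a}) = μ (T' ⁻¹' {a}) := by
    apply measure_congr
    filter_upwards [h] with ω hω
    change (T ω ∈ ({a} : Set A)) = (T' ω ∈ ({a} : Set A))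
    rw [hω]
  rw [prob, this, ← prob]

lemma entropy_of_subsingleton {A : Type*} [Fintype A] [Subsingleton A] (T : Ω → A) :
    entropy μ T = 0 := by
  unfold entropy
  refine Finset.sum_eq_zero fun u _ => ?_
  have : T ⁻¹' {u} = Set.univ := by
    ext ω; simp [Subsingleton.elim (T ω) u]
  simp [this, prob]

lemma neg_mul_logb_div {p q : ℝ} (hp : 0 ≤ p) (hpq : p ≤ q) :
    -p * Real.logb 2 (p / q) = -p * Real.logb 2 p + p * Real.logb 2 q := by
  rcases eq_or_lt_of_le hp with h | h
  · simp [← h]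
  · have hq : 0 < q := lt_of_lt_of_le h hpq
    rw [Real.logb_div h.ne' hq.ne']; ring

lemma condEntropy_eq {A B : Type*} [Fintype A] [Fintype B]
    [MeasurableSpace A] [MeasurableSingletonClass A]
    [MeasurableSpace B] [MeasurableSingletonClass B]
    {U : Ω → A} {V : Ω → B} (hU : Measurable U) (hV : Measurable V) :
    condEntropy μ U V = entropy μ (fun ω => (U ω, V ω)) - entropy μ V := by
  unfold condEntropy entropy
  rw [Fintype.sum_prod_type]
  simp only [pair_preimage U V]
  conv_rhs => rw [Finset.sum_comm]
  rw [← Finset.sum_sub_distrib]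
  refine Finset.sum_congr rfl fun v _ => ?_
  have hsum : ∑ u : A, prob μ (U ⁻¹' {u} ∩ V ⁻¹' {v}) = prob μ (V ⁻¹' {v}) :=
    sum_prob_inter hU (hV (measurableSet_singleton v))
  have hterm : ∀ u ∈ Finset.univ, -(prob μ (U ⁻¹' {u} ∩ V ⁻¹' {v})) *
      Real.logb 2 (prob μ (U ⁻¹' {u} ∩ V ⁻¹' {v}) / prob μ (V ⁻¹' {v})) =
      -(prob μ (U ⁻¹' {u} ∩ V ⁻¹' {v})) * Real.logb 2 (prob μ (U ⁻¹' {u} ∩ V ⁻¹' {v})) +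
        (prob μ (U ⁻¹' {u} ∩ V ⁻¹' {v})) * Real.logb 2 (prob μ (V ⁻¹' {v})) :=
    fun u _ => neg_mul_logb_div (prob_nonneg _) (prob_mono Set.inter_subset_right)
  rw [Finset.sum_congr rfl hterm, Finset.sum_add_distrib, ← Finset.sum_mul, hsum]
  ring

lemma ci_entropy {A B C : Type*} [Fintype A] [Fintype B] [Fintype C]
    [MeasurableSpace A] [MeasurableSingletonClass A]
    [MeasurableSpace B] [MeasurableSingletonClass B]
    [MeasurableSpace C] [MeasurableSingletonClass C]
    {W : Ω → A} {Y : Ω → B} {S : Ω → C}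
    (hW : Measurable W) (hY : Measurable Y) (hS : Measurable S)
    (hCI : ∀ (y : B) (w : A) (s : C), 0 < prob μ (S ⁻¹' {s}) →
      prob μ (Y ⁻¹' {y} ∩ W ⁻¹' {w} ∩ S ⁻¹' {s}) / prob μ (S ⁻¹' {s}) =
        (prob μ (Y ⁻¹' {y} ∩ S ⁻¹' {s}) / prob μ (S ⁻¹' {s})) *
          (prob μ (W ⁻¹' {w} ∩ S ⁻¹' {s}) / prob μ (S ⁻¹' {s}))) :
    entropy μ (fun ω => (W ω, (Y ω, S ω))) + entropy μ S =
      entropy μ (fun ω => (Y ω, S ω)) + entropy μ (fun ω => (W ω, S ω)) := by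
  set p3 : A → B → C → ℝ := fun w y s => prob μ (W ⁻¹' {w} ∩ (Y ⁻¹' {y} ∩ S ⁻¹' {s})) with hp3
  set pYS : B → C → ℝ := fun y s => prob μ (Y ⁻¹' {y} ∩ S ⁻¹' {s}) with hpYS
  set pWS : A → C → ℝ := fun w s => prob μ (W ⁻¹' {w} ∩ S ⁻¹' {s}) with hpWS
  set pS : C → ℝ := fun s => prob μ (S ⁻¹' {s}) with hpS
  have hYSm : ∀ (y : B) (s : C), MeasurableSet (Y ⁻¹' {y} ∩ S ⁻¹' {s}) :=
    fun y s => (hY (measurableSet_singleton y)).inter (hS (measurableSet_singleton s))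
  have hWSm : ∀ (w : A) (s : C), MeasurableSet (W ⁻¹' {w} ∩ S ⁻¹' {s}) :=
    fun w s => (hW (measurableSet_singleton w)).inter (hS (measurableSet_singleton s))
  have m1 : ∀ (y : B) (s : C), ∑ w : A, p3 w y s = pYS y s :=
    fun y s => sum_prob_inter hW (hYSm y s)
  have m2 : ∀ (w : A) (s : C), ∑ y : B, p3 w y s = pWS w s := by
    intro w s
    have hre : ∀ y : B, W ⁻¹' {w} ∩ (Y ⁻¹' {y} ∩ S ⁻¹' {s}) =
        Y ⁻¹' {y} ∩ (W ⁻¹' {w} ∩ S ⁻¹' {s}) := fun y => Set.inter_left_comm _ _ _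
    simp only [hp3, hre]
    exact sum_prob_inter hY (hWSm w s)
  have m3 : ∀ s : C, ∑ w : A, pWS w s = pS s :=
    fun s => sum_prob_inter hW (hS (measurableSet_singleton s))
  have collapse1 : ∀ (c : B → C → ℝ),
      (∑ w : A, ∑ y : B, ∑ s : C, p3 w y s * c y s) = ∑ y : B, ∑ s : C, pYS y s * c y s := by
    intro c
    rw [Finset.sum_comm]
    refine Finset.sum_congr rfl fun y _ => ?_
    rw [Finset.sum_comm]
    refine Finset.sum_congr rfl fun s _ => ?_
    rw [← Finset.sum_mul, m1 y s]
  have collapse2 : ∀ (c : A → C → ℝ),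
      (∑ w : A, ∑ y : B, ∑ s : C, p3 w y s * c w s) = ∑ w : A, ∑ s : C, pWS w s * c w s := by
    intro c
    refine Finset.sum_congr rfl fun w _ => ?_
    rw [Finset.sum_comm]
    refine Finset.sum_congr rfl fun s _ => ?_
    rw [← Finset.sum_mul, m2 w s]
  have collapse3 : ∀ (c : C → ℝ),
      (∑ w : A, ∑ y : B, ∑ s : C, p3 w y s * c s) = ∑ s : C, pS s * c s := by
    intro c
    rw [collapse2 (fun _ s => c s), Finset.sum_comm]
    refine Finset.sum_congr rfl fun s _ => ?_
    rw [← Finset.sum_mul, m3 s]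
  have key : ∀ (w : A) (y : B) (s : C),
      -(p3 w y s) * Real.logb 2 (p3 w y s) =
        p3 w y s * (-Real.logb 2 (pYS y s)) + p3 w y s * (-Real.logb 2 (pWS w s)) +
          p3 w y s * Real.logb 2 (pS s) := by
    intro w y s
    rcases eq_or_lt_of_le (prob_nonneg (μ := μ) (W ⁻¹' {w} ∩ (Y ⁻¹' {y} ∩ S ⁻¹' {s}))) with h | h
    · have h0 : p3 w y s = 0 := h.symm
      simp [h0]
    · have hp : 0 < p3 w y s := h
      have hS0 : 0 < pS s :=
        lt_of_lt_of_le hp (prob_mono (Set.inter_subset_right.trans Set.inter_subset_right))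
      have hYS0 : 0 < pYS y s := lt_of_lt_of_le hp (prob_mono Set.inter_subset_right)
      have hWS0 : 0 < pWS w s :=
        lt_of_lt_of_le hp (prob_mono (Set.inter_subset_inter_right _ Set.inter_subset_right))
      have hset : Y ⁻¹' {y} ∩ W ⁻¹' {w} ∩ S ⁻¹' {s} =
          W ⁻¹' {w} ∩ (Y ⁻¹' {y} ∩ S ⁻¹' {s}) := by
        rw [Set.inter_comm (Y ⁻¹' {y}) (W ⁻¹' {w}), Set.inter_assoc]
      have h2 := hCI y w s hS0
      rw [hset] at h2
      have hfac : p3 w y s = pYS y s * pWS w s / pS s := by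
        field_simp at h2 ⊢
        have h3 := (div_eq_div_iff hS0.ne' (pow_pos hS0 2).ne').mp h2
        refine mul_right_cancel₀ hS0.ne' ?_
        simp only [hp3, hpYS, hpWS, hpS] at h3 ⊢
        linear_combination h3
      have hlog : Real.logb 2 (p3 w y s) =
          Real.logb 2 (pYS y s) + Real.logb 2 (pWS w s) - Real.logb 2 (pS s) := by
        rw [hfac, Real.logb_div (mul_ne_zero hYS0.ne' hWS0.ne') hS0.ne',
          Real.logb_mul hYS0.ne' hWS0.ne']
      rw [hlog]; ring
  have tpre : ∀ (w : A) (y : B) (s : C),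
      (fun ω => (W ω, (Y ω, S ω))) ⁻¹' {(w, (y, s))} =
        W ⁻¹' {w} ∩ (Y ⁻¹' {y} ∩ S ⁻¹' {s}) := by
    intro w y s; ext ω; simp [Prod.ext_iff, and_assoc]
  have E1 : entropy μ (fun ω => (W ω, (Y ω, S ω))) =
      ∑ w : A, ∑ y : B, ∑ s : C, -(p3 w y s) * Real.logb 2 (p3 w y s) := by
    unfold entropy
    rw [Fintype.sum_prod_type]
    refine Finset.sum_congr rfl fun w _ => ?_
    rw [Fintype.sum_prod_type]
    refine Finset.sum_congr rfl fun y _ => Finset.sum_congr rfl fun s _ => ?_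
    rw [tpre]
  have E3 : entropy μ (fun ω => (Y ω, S ω)) =
      ∑ y : B, ∑ s : C, -(pYS y s) * Real.logb 2 (pYS y s) := by
    unfold entropy
    rw [Fintype.sum_prod_type]
    refine Finset.sum_congr rfl fun y _ => Finset.sum_congr rfl fun s _ => ?_
    rw [pair_preimage Y S]
  have E4 : entropy μ (fun ω => (W ω, S ω)) =
      ∑ w : A, ∑ s : C, -(pWS w s) * Real.logb 2 (pWS w s) := by
    unfold entropy
    rw [Fintype.sum_prod_type]
    refine Finset.sum_congr rfl fun w _ => Finset.sum_congr rfl fun s _ => ?_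
    rw [pair_preimage W S]
  have ES : entropy μ S = ∑ s : C, -(pS s) * Real.logb 2 (pS s) := rfl
  rw [E1, E3, E4, ES]
  calc (∑ w : A, ∑ y : B, ∑ s : C, -(p3 w y s) * Real.logb 2 (p3 w y s)) +
        ∑ s : C, -(pS s) * Real.logb 2 (pS s)
      = ((∑ w : A, ∑ y : B, ∑ s : C, p3 w y s * (-Real.logb 2 (pYS y s))) +
          (∑ w : A, ∑ y : B, ∑ s : C, p3 w y s * (-Real.logb 2 (pWS w s))) +
          (∑ w : A, ∑ y : B, ∑ s : C, p3 w y s * Real.logb 2 (pS s))) +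
          ∑ s : C, -(pS s) * Real.logb 2 (pS s) := by
        congr 1
        simp only [key, Finset.sum_add_distrib]
    _ = ((∑ y : B, ∑ s : C, pYS y s * (-Real.logb 2 (pYS y s))) +
          (∑ w : A, ∑ s : C, pWS w s * (-Real.logb 2 (pWS w s))) +
          (∑ s : C, pS s * Real.logb 2 (pS s))) +
          ∑ s : C, -(pS s) * Real.logb 2 (pS s) := by
        rw [collapse1 (fun y s => -Real.logb 2 (pYS y s)),
          collapse2 (fun w s => -Real.logb 2 (pWS w s)),
          collapse3 (fun s => Real.logb 2 (pS s))]
    _ = (∑ y : B, ∑ s : C, -(pYS y s) * Real.logb 2 (pYS y s)) +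
          ∑ w : A, ∑ s : C, -(pWS w s) * Real.logb 2 (pWS w s) := by
        have hA : (∑ y : B, ∑ s : C, pYS y s * (-Real.logb 2 (pYS y s))) =
            ∑ y : B, ∑ s : C, -(pYS y s) * Real.logb 2 (pYS y s) :=
          Finset.sum_congr rfl fun y _ => Finset.sum_congr rfl fun s _ => by ring
        have hB : (∑ w : A, ∑ s : C, pWS w s * (-Real.logb 2 (pWS w s))) =
            ∑ w : A, ∑ s : C, -(pWS w s) * Real.logb 2 (pWS w s) :=
          Finset.sum_congr rfl fun w _ => Finset.sum_congr rfl fun s _ => by ring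
        have hC : (∑ s : C, pS s * Real.logb 2 (pS s)) +
            (∑ s : C, -(pS s) * Real.logb 2 (pS s)) = 0 := by
          rw [← Finset.sum_add_distrib]
          exact Finset.sum_eq_zero fun s _ => by ring
        rw [hA, hB]
        linarith [hC]

end Helpers

/-- Prefix of outputs indexed by a natural number bound. -/
def pastN {Ω 𝒴 : Type*} {n : ℕ} (Y : Fin n → Ω → 𝒴) (k : ℕ) (hk : k ≤ n) (ω : Ω) :
    Fin k → 𝒴 :=
  fun j => Y ⟨j.1, lt_of_lt_of_le j.2 hk⟩ ω

/-- **Chain rule for causal encoding with feedback.** If `X_i = e_i(W, Y^{i-1})` almost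
surely and `Y_i` is conditionally independent of `W` given `(X_i, Y^{i-1})`, then
`I(W ; Y^n) = ∑_{i} I(X_i ; Y_i | Y^{i-1})`, i.e. the mutual information between the message
and the outputs equals the directed mutual information from `X^n` to `Y^n`. -/
theorem stmt7 {Ω : Type*} [MeasurableSpace Ω] (μ : Measure Ω) [IsProbabilityMeasure μ]
    {𝒲 𝒳 𝒴 : Type*} [Fintype 𝒲] [Fintype 𝒳] [Fintype 𝒴]
    [MeasurableSpace 𝒲] [MeasurableSingletonClass 𝒲]
    [MeasurableSpace 𝒳] [MeasurableSingletonClass 𝒳]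
    [MeasurableSpace 𝒴] [MeasurableSingletonClass 𝒴]
    (n : ℕ) (hn : 1 ≤ n)
    (W : Ω → 𝒲) (X : Fin n → Ω → 𝒳) (Y : Fin n → Ω → 𝒴)
    (hW : Measurable W) (hX : ∀ i, Measurable (X i)) (hY : ∀ i, Measurable (Y i))
    (e : (i : Fin n) → 𝒲 × (Fin i → 𝒴) → 𝒳)
    (henc : ∀ i : Fin n, ∀ᵐ ω ∂μ, X i ω = e i (W ω, past Y i ω))
    (hCI : ∀ (i : Fin n) (y : 𝒴) (w : 𝒲) (x : 𝒳) (yp : Fin i → 𝒴),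
      0 < prob μ ((X i) ⁻¹' {x} ∩ (past Y i) ⁻¹' {yp}) →
      prob μ ((Y i) ⁻¹' {y} ∩ W ⁻¹' {w} ∩ (X i) ⁻¹' {x} ∩ (past Y i) ⁻¹' {yp}) /
          prob μ ((X i) ⁻¹' {x} ∩ (past Y i) ⁻¹' {yp}) =
        (prob μ ((Y i) ⁻¹' {y} ∩ (X i) ⁻¹' {x} ∩ (past Y i) ⁻¹' {yp}) /
            prob μ ((X i) ⁻¹' {x} ∩ (past Y i) ⁻¹' {yp})) *
          (prob μ (W ⁻¹' {w} ∩ (X i) ⁻¹' {x} ∩ (past Y i) ⁻¹' {yp}) /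
            prob μ ((X i) ⁻¹' {x} ∩ (past Y i) ⁻¹' {yp}))) :
    mutInfo μ W (fun ω (i : Fin n) => Y i ω) =
      ∑ i : Fin n, condMutInfo μ (X i) (Y i) (past Y i) := by
  classical
  have hpastm : ∀ i : Fin n, Measurable (past Y i) := fun i =>
    measurable_pi_lambda _ fun j => hY _
  have hPm : ∀ (k : ℕ) (hk : k ≤ n), Measurable (pastN Y k hk) := fun k hk =>
    measurable_pi_lambda _ fun j => hY _
  -- Step 1: per-step replacement of X i by W
  have hstep : ∀ i : Fin n,
      condMutInfo μ (X i) (Y i) (past Y i) = condMutInfo μ W (Y i) (past Y i) := by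
    intro i
    have hPmeas : Measurable (past Y i) := hpastm i
    -- relabeling entropies
    have hA : entropy μ (fun ω => (W ω, (X i ω, past Y i ω))) =
        entropy μ (fun ω => (W ω, past Y i ω)) := by
      have hinj : Function.Injective
          (fun p : 𝒲 × (Fin i → 𝒴) => (p.1, (e i p, p.2))) := by
        rintro ⟨w1, p1⟩ ⟨w2, p2⟩ h
        simp only [Prod.mk.injEq] at h
        exact Prod.ext h.1 h.2.2
      have hae : (fun ω => (W ω, (X i ω, past Y i ω))) =ᵐ[μ]
          (fun ω => ((fun p : 𝒲 × (Fin i → 𝒴) => (p.1, (e i p, p.2)))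
            ((W ω, past Y i ω)))) := by
        filter_upwards [henc i] with ω hω
        simp only [hω]
      rw [entropy_congr_ae hae]
      exact entropy_comp hinj _
    have hB : entropy μ (fun ω => (W ω, (Y i ω, (X i ω, past Y i ω)))) =
        entropy μ (fun ω => ((W ω, Y i ω), past Y i ω)) := by
      have hinj : Function.Injective
          (fun q : (𝒲 × 𝒴) × (Fin i → 𝒴) =>
            (q.1.1, (q.1.2, (e i (q.1.1, q.2), q.2)))) := by
        rintro ⟨⟨w1, y1⟩, p1⟩ ⟨⟨w2, y2⟩, p2⟩ h
        simp only [Prod.mk.injEq] at h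
        obtain ⟨h1, h2, _, h4⟩ := h
        simp [h1, h2, h4]
      have hae : (fun ω => (W ω, (Y i ω, (X i ω, past Y i ω)))) =ᵐ[μ]
          (fun ω => ((fun q : (𝒲 × 𝒴) × (Fin i → 𝒴) =>
            (q.1.1, (q.1.2, (e i (q.1.1, q.2), q.2)))) (((W ω, Y i ω), past Y i ω)))) := by
        filter_upwards [henc i] with ω hω
        simp only [hω]
      rw [entropy_congr_ae hae]
      exact entropy_comp hinj _
    have hC : entropy μ (fun ω => ((X i ω, Y i ω), past Y i ω)) =
        entropy μ (fun ω => (Y i ω, (X i ω, past Y i ω))) := by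
      have hinj : Function.Injective
          (fun q : 𝒴 × (𝒳 × (Fin i → 𝒴)) => ((q.2.1, q.1), q.2.2)) := by
        rintro ⟨y1, x1, p1⟩ ⟨y2, x2, p2⟩ h
        simp only [Prod.mk.injEq] at h
        obtain ⟨⟨h1, h2⟩, h3⟩ := h
        simp [h1, h2, h3]
      exact entropy_comp (μ := μ) hinj (fun ω => (Y i ω, (X i ω, past Y i ω)))
    have hCI' : ∀ (y : 𝒴) (w : 𝒲) (s : 𝒳 × (Fin i → 𝒴)),
        0 < prob μ ((fun ω => (X i ω, past Y i ω)) ⁻¹' {s}) →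
        prob μ (Y i ⁻¹' {y} ∩ W ⁻¹' {w} ∩ (fun ω => (X i ω, past Y i ω)) ⁻¹' {s}) /
            prob μ ((fun ω => (X i ω, past Y i ω)) ⁻¹' {s}) =
          (prob μ (Y i ⁻¹' {y} ∩ (fun ω => (X i ω, past Y i ω)) ⁻¹' {s}) /
              prob μ ((fun ω => (X i ω, past Y i ω)) ⁻¹' {s})) *
            (prob μ (W ⁻¹' {w} ∩ (fun ω => (X i ω, past Y i ω)) ⁻¹' {s}) /
              prob μ ((fun ω => (X i ω, past Y i ω)) ⁻¹' {s})) := by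
      rintro y w ⟨x, yp⟩ hpos
      rw [pair_preimage (X i) (past Y i) x yp] at hpos ⊢
      rw [← Set.inter_assoc (Y i ⁻¹' {y} ∩ W ⁻¹' {w}), ← Set.inter_assoc (Y i ⁻¹' {y}),
        ← Set.inter_assoc (W ⁻¹' {w})]
      exact hCI i y w x yp hpos
    have hD := ci_entropy (μ := μ) hW (hY i) ((hX i).prodMk hPmeas) hCI'
    unfold condMutInfo
    rw [condEntropy_eq (hX i) hPmeas, condEntropy_eq (hY i) hPmeas,
      condEntropy_eq ((hX i).prodMk (hY i)) hPmeas,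
      condEntropy_eq hW hPmeas, condEntropy_eq (hW.prodMk (hY i)) hPmeas]
    linarith [hA, hB, hC, hD]
  -- Step 2: the telescoping function
  set a : ℕ → ℝ := fun k =>
    if hk : k ≤ n then
      entropy μ (pastN Y k hk) - entropy μ (fun ω => (W ω, pastN Y k hk ω))
    else 0 with ha
  have htele : ∀ i : Fin n,
      condMutInfo μ W (Y i) (past Y i) = a (i.1 + 1) - a i.1 := by
    intro i
    have h1 : (i.1 : ℕ) ≤ n := i.isLt.le
    have h2 : i.1 + 1 ≤ n := i.isLt
    have ha1 : a i.1 = entropy μ (pastN Y i.1 h1) -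
        entropy μ (fun ω => (W ω, pastN Y i.1 h1 ω)) := dif_pos h1
    have ha2 : a (i.1 + 1) = entropy μ (pastN Y (i.1 + 1) h2) -
        entropy μ (fun ω => (W ω, pastN Y (i.1 + 1) h2 ω)) := dif_pos h2
    have hPP : past Y i = pastN Y i.1 h1 := rfl
    have hsucc1 : entropy μ (fun ω => (Y i ω, pastN Y i.1 h1 ω)) =
        entropy μ (pastN Y (i.1 + 1) h2) := by
      have hinj : Function.Injective
          (fun v : Fin (i.1 + 1) → 𝒴 => (v (Fin.last i.1), Fin.init v)) :=
        Function.LeftInverse.injective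
          (g := fun q : 𝒴 × (Fin i.1 → 𝒴) => Fin.snoc q.2 q.1)
          (fun v => Fin.snoc_init_self v)
      have heq : (fun ω => (Y i ω, pastN Y i.1 h1 ω)) =
          (fun ω => (fun v : Fin (i.1 + 1) → 𝒴 => (v (Fin.last i.1), Fin.init v))
            (pastN Y (i.1 + 1) h2 ω)) := rfl
      rw [heq]
      exact entropy_comp hinj _
    have hsucc2 : entropy μ (fun ω => ((W ω, Y i ω), pastN Y i.1 h1 ω)) =
        entropy μ (fun ω => (W ω, pastN Y (i.1 + 1) h2 ω)) := by
      have hinj : Function.Injective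
          (fun q : 𝒲 × (Fin (i.1 + 1) → 𝒴) =>
            ((q.1, q.2 (Fin.last i.1)), Fin.init q.2)) :=
        Function.LeftInverse.injective
          (g := fun q : (𝒲 × 𝒴) × (Fin i.1 → 𝒴) => (q.1.1, Fin.snoc q.2 q.1.2))
          (fun q => by simp [Fin.snoc_init_self])
      have heq : (fun ω => ((W ω, Y i ω), pastN Y i.1 h1 ω)) =
          (fun ω => (fun q : 𝒲 × (Fin (i.1 + 1) → 𝒴) =>
            ((q.1, q.2 (Fin.last i.1)), Fin.init q.2)) ((W ω, pastN Y (i.1 + 1) h2 ω))) := rfl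
      rw [heq]
      exact entropy_comp hinj _
    unfold condMutInfo
    rw [condEntropy_eq hW (hpastm i), condEntropy_eq (hY i) (hpastm i),
      condEntropy_eq (hW.prodMk (hY i)) (hpastm i), ha1, ha2, hPP]
    rw [hsucc1, hsucc2]
    ring
  have ha0 : a 0 = -entropy μ W := by
    have h0 : (0 : ℕ) ≤ n := Nat.zero_le n
    have : a 0 = entropy μ (pastN Y 0 h0) -
        entropy μ (fun ω => (W ω, pastN Y 0 h0 ω)) := dif_pos h0
    rw [this]
    have hsub : Subsingleton (Fin 0 → 𝒴) := ⟨fun a b => funext fun j => j.elim0⟩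
    have h1 : entropy μ (pastN Y 0 h0) = 0 := @entropy_of_subsingleton _ _ _ _ _ _ hsub _
    have h2 : entropy μ (fun ω => (W ω, pastN Y 0 h0 ω)) = entropy μ W := by
      have heq : (fun ω => (W ω, pastN Y 0 h0 ω)) =
          (fun ω => ((fun w : 𝒲 => (w, (fun j : Fin 0 => j.elim0 : Fin 0 → 𝒴))) (W ω))) := by
        funext ω
        exact congrArg _ (funext fun j => j.elim0)
      have hinj : Function.Injective
          (fun w : 𝒲 => (w, (fun j : Fin 0 => j.elim0 : Fin 0 → 𝒴))) := by
        intro a b h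
        exact congrArg Prod.fst h
      rw [heq]
      exact entropy_comp hinj W
    rw [h1, h2]
    ring
  have han : a n = entropy μ (fun ω (j : Fin n) => Y j ω) -
      entropy μ (fun ω => (W ω, fun j : Fin n => Y j ω)) := by
    have : a n = entropy μ (pastN Y n le_rfl) -
        entropy μ (fun ω => (W ω, pastN Y n le_rfl ω)) := dif_pos le_rfl
    rw [this]
    rfl
  have hsum2 : ∑ i : Fin n, condMutInfo μ W (Y i) (past Y i) = a n - a 0 := by
    calc ∑ i : Fin n, condMutInfo μ W (Y i) (past Y i)
        = ∑ i : Fin n, (a (i.1 + 1) - a i.1) :=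
          Finset.sum_congr rfl fun i _ => htele i
      _ = ∑ k ∈ Finset.range n, (a (k + 1) - a k) :=
          Fin.sum_univ_eq_sum_range (fun k => a (k + 1) - a k) n
      _ = a n - a 0 := Finset.sum_range_sub a n
  calc mutInfo μ W (fun ω (i : Fin n) => Y i ω)
      = a n - a 0 := by
        unfold mutInfo
        rw [han, ha0]
        ring
    _ = ∑ i : Fin n, condMutInfo μ W (Y i) (past Y i) := hsum2.symm
    _ = ∑ i : Fin n, condMutInfo μ (X i) (Y i) (past Y i) :=
          Finset.sum_congr rfl fun i _ => (hstep i).symm
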